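/- The polynomial f̃ = −xy − 2z + x²z + y²z − xyz² + z³ is irreducible in the polynomial ring ℂ[x,y,z]. -/

import Mathlib

open MvPolynomial

/-- The defining polynomial `f̃ = −xy − 2z + x²z + y²z − xyz² + z³` of the affine
canonical component of the character variety of the Whitehead link complement,
as an element of `ℂ[x,y,z]` with `x = X 0`, `y = X 1`, `z = X 2`. -/
noncomputable def whiteheadPoly : MvPolynomial (Fin 3) ℂ :=
  -X 0 * X 1 - 2 * X 2 + (X 0)^2 * X 2 + (X 1)^2 * X 2 - X 0 * X 1 * (X 2)^2 + (X 2)^3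

/-- Auxiliary: `f̃` viewed as a monic cubic in `z` over `ℂ[x,y]`. -/
noncomputable def whiteheadAuxP : Polynomial (MvPolynomial (Fin 2) ℂ) :=
  Polynomial.X^3 - Polynomial.C (X 0 * X 1) * Polynomial.X^2
    + Polynomial.C ((X 0)^2 + (X 1)^2 - 2) * Polynomial.X - Polynomial.C (X 0 * X 1)

/-- Auxiliary: the cubic has no root in `ℂ[x,y]`. -/
lemma whiteheadAux_no_root (r : MvPolynomial (Fin 2) ℂ)
    (h : r^3 - (X 0 * X 1) * r^2 + ((X 0)^2 + (X 1)^2 - 2) * r - X 0 * X 1 = 0) : False := by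
  set ψ := (MvPolynomial.aeval (R := ℂ) (S₁ := Polynomial ℂ) fun _ : Fin 2 => Polynomial.X)
    with hψ
  have h' := congrArg ψ h
  set s := ψ r with hsdef
  simp only [map_add, map_sub, map_mul, map_pow, map_zero, map_ofNat, MvPolynomial.aeval_X,
    hψ] at h'
  have hs : s^3 - Polynomial.X^2 * s^2 + (2*Polynomial.X^2 - 2) * s - Polynomial.X^2 = 0 := by
    linear_combination h'
  clear h h' hψ hsdef
  have hco : IsCoprime s ((s - 1)^2) :=
    (show IsCoprime s (s-1) from ⟨1, -1, by ring⟩).pow_right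
  have hdvd : s ∣ (Polynomial.X : Polynomial ℂ)^2 :=
    hco.dvd_of_dvd_mul_right ⟨s^2 - 2, by linear_combination -hs⟩
  have hX : Prime (Polynomial.X : Polynomial ℂ) := Polynomial.prime_X
  have hXne : (Polynomial.X : Polynomial ℂ) ≠ 0 := Polynomial.X_ne_zero
  obtain ⟨w, hw⟩ := hdvd
  have hcases : (∃ c : ℂ, s = Polynomial.C c) ∨ (∃ c : ℂ, s = Polynomial.C c * Polynomial.X)
      ∨ (∃ c : ℂ, s = Polynomial.C c * Polynomial.X^2) := by
    rcases hX.2.2 s w (⟨Polynomial.X, by linear_combination -hw⟩) with hXs | hXw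
    · obtain ⟨s1, hs1⟩ := hXs
      have h1 : Polynomial.X = s1 * w :=
        mul_left_cancel₀ hXne (by linear_combination hw + w * hs1)
      rcases hX.2.2 s1 w ⟨1, by linear_combination -h1⟩ with hA | hB
      · obtain ⟨s2, hs2⟩ := hA
        have h2 : (1 : Polynomial ℂ) = s2 * w :=
          mul_left_cancel₀ hXne (by linear_combination h1 + w * hs2)
        obtain ⟨c, -, hc⟩ := Polynomial.isUnit_iff.mp (IsUnit.of_mul_eq_one (a := s2) w h2.symm)
        exact Or.inr (Or.inr ⟨c, by rw [hs1, hs2, ← hc]; ring⟩)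
      · obtain ⟨w1, hw1⟩ := hB
        have h2 : (1 : Polynomial ℂ) = s1 * w1 :=
          mul_left_cancel₀ hXne (by linear_combination h1 + s1 * hw1)
        obtain ⟨c, -, hc⟩ := Polynomial.isUnit_iff.mp (IsUnit.of_mul_eq_one (a := s1) w1 h2.symm)
        exact Or.inr (Or.inl ⟨c, by rw [hs1, ← hc]; ring⟩)
    · obtain ⟨w1, hw1⟩ := hXw
      have h1 : Polynomial.X = s * w1 :=
        mul_left_cancel₀ hXne (by linear_combination hw + s * hw1)
      rcases hX.2.2 s w1 ⟨1, by linear_combination -h1⟩ with hA | hB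
      · obtain ⟨t, ht⟩ := hA
        have h2 : (1 : Polynomial ℂ) = t * w1 :=
          mul_left_cancel₀ hXne (by linear_combination h1 + w1 * ht)
        obtain ⟨c, -, hc⟩ := Polynomial.isUnit_iff.mp (IsUnit.of_mul_eq_one (a := t) w1 h2.symm)
        exact Or.inr (Or.inl ⟨c, by rw [ht, ← hc]; ring⟩)
      · obtain ⟨w2, hw2⟩ := hB
        have h2 : (1 : Polynomial ℂ) = s * w2 :=
          mul_left_cancel₀ hXne (by linear_combination h1 + s * hw2)
        obtain ⟨c, -, hc⟩ := Polynomial.isUnit_iff.mp (IsUnit.of_mul_eq_one (a := s) w2 h2.symm)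
        exact Or.inl ⟨c, hc.symm⟩
  rcases hcases with ⟨c, hc⟩ | ⟨c, hc⟩ | ⟨c, hc⟩ <;> rw [hc] at hs
  · have E1 := congrArg (Polynomial.eval 0) hs
    have E2 := congrArg (Polynomial.eval 1) hs
    simp only [Polynomial.eval_add, Polynomial.eval_sub, Polynomial.eval_mul, Polynomial.eval_pow,
      Polynomial.eval_C, Polynomial.eval_X, Polynomial.eval_ofNat, Polynomial.eval_zero,
      Polynomial.eval_one] at E1 E2
    have h1 : (c - 1)^2 = 0 := by linear_combination E1 - E2
    have h2 : c = 1 := by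
      have := pow_eq_zero_iff (two_ne_zero) |>.mp h1
      linear_combination this
    rw [h2] at E1; norm_num at E1
  · have E1 := congrArg (Polynomial.eval 1) hs
    have E2 := congrArg (Polynomial.eval (-1)) hs
    simp only [Polynomial.eval_add, Polynomial.eval_sub, Polynomial.eval_mul, Polynomial.eval_pow,
      Polynomial.eval_C, Polynomial.eval_X, Polynomial.eval_ofNat, Polynomial.eval_zero,
      Polynomial.eval_one] at E1 E2
    have h1 : c^2 = -1 := by linear_combination (-1/2 : ℂ)*E1 + (-1/2 : ℂ)*E2
    have h2 : c = 0 := by linear_combination (-1 : ℂ)*E1 + (c-1)*h1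
    rw [h2] at h1; norm_num at h1
  · have E1 := congrArg (Polynomial.eval 1) hs
    have E2 := congrArg (Polynomial.eval 2) hs
    simp only [Polynomial.eval_add, Polynomial.eval_sub, Polynomial.eval_mul, Polynomial.eval_pow,
      Polynomial.eval_C, Polynomial.eval_X, Polynomial.eval_ofNat, Polynomial.eval_zero,
      Polynomial.eval_one] at E1 E2
    have hc5 : c = -5/2 := by linear_combination (1/24 : ℂ)*E2 - (8/3 : ℂ)*E1
    rw [hc5] at E1; norm_num at E1

/-- Auxiliary: `whiteheadAuxP` is irreducible. -/
lemma whiteheadAuxP_irreducible : Irreducible whiteheadAuxP := by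
  have hmon : whiteheadAuxP.Monic := by unfold whiteheadAuxP; monicity!
  have hdeg : whiteheadAuxP.natDegree = 3 := by unfold whiteheadAuxP; compute_degree!
  set R := MvPolynomial (Fin 2) ℂ
  set K := FractionRing R
  rw [hmon.irreducible_iff_irreducible_map_fraction_map (K := K)]
  rw [Polynomial.irreducible_iff_roots_eq_zero_of_degree_le_three]
  · rw [Multiset.eq_zero_iff_forall_notMem]
    intro t ht
    have hroot : (whiteheadAuxP.map (algebraMap R K)).IsRoot t :=
      Polynomial.isRoot_of_mem_roots ht
    have hint : IsIntegral R t := ⟨whiteheadAuxP, hmon, by rwa [← Polynomial.eval_map]⟩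
    obtain ⟨r, hr⟩ := IsIntegrallyClosed.isIntegral_iff.mp hint
    have h0 : algebraMap R K (Polynomial.eval r whiteheadAuxP) = 0 := by
      rw [← Polynomial.eval₂_hom, ← Polynomial.eval_map, hr]
      exact hroot
    have heval : Polynomial.eval r whiteheadAuxP = 0 :=
      (map_eq_zero_iff _ (IsFractionRing.injective R K)).mp h0
    refine whiteheadAux_no_root r ?_
    rw [← heval]
    unfold whiteheadAuxP
    simp [Polynomial.eval_pow, Polynomial.eval_mul]
  · rw [hmon.natDegree_map, hdeg]; norm_num
  · rw [hmon.natDegree_map, hdeg]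

theorem whiteheadPoly_irreducible : Irreducible whiteheadPoly := by
  let e : MvPolynomial (Fin 3) ℂ ≃ₐ[ℂ] Polynomial (MvPolynomial (Fin 2) ℂ) :=
    (renameEquiv ℂ (Equiv.swap 0 2)).trans (finSuccEquiv ℂ 2)
  have hP : e whiteheadPoly = whiteheadAuxP := by
    have h0 : e (X 0) = Polynomial.C (X 1) := by
      rw [show e (X 0) = (finSuccEquiv ℂ 2) ((renameEquiv ℂ (Equiv.swap 0 2)) (X 0)) from rfl,
        renameEquiv_apply, rename_X, Equiv.swap_apply_left,
        show ((2:Fin 3)) = Fin.succ 1 from rfl, finSuccEquiv_X_succ]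
    have h1 : e (X 1) = Polynomial.C (X 0) := by
      rw [show e (X 1) = (finSuccEquiv ℂ 2) ((renameEquiv ℂ (Equiv.swap 0 2)) (X 1)) from rfl,
        renameEquiv_apply, rename_X,
        show (Equiv.swap (0:Fin 3) 2) 1 = Fin.succ 0 from rfl, finSuccEquiv_X_succ]
    have h2 : e (X 2) = Polynomial.X := by
      rw [show e (X 2) = (finSuccEquiv ℂ 2) ((renameEquiv ℂ (Equiv.swap 0 2)) (X 2)) from rfl,
        renameEquiv_apply, rename_X, Equiv.swap_apply_right]
      exact finSuccEquiv_X_zero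
    unfold whiteheadPoly whiteheadAuxP
    simp only [map_add, map_sub, map_mul, map_pow, map_neg, map_ofNat, h0, h1, h2]
    ring
  exact (MulEquiv.irreducible_iff e).mp (hP ▸ whiteheadAuxP_irreducible)
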